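/- Let s ≥ 2 and k ≥ 1 be integers, let θ be a bijection of the k-blocks (Fin k → Fin s) with θ (fun _ => 0) ≠ (fun _ => s − 1) and with no fixed block (θ b ≠ b for every block b), and let F : ℝ → ℝ satisfy: for every admissible digit sequence a, F(∑_{n=0}^∞ a n / s^{n+1}) = ∑_{n=0}^∞ (Θ a) n / s^{n+1}. Then F has no invariant points in [0,1): for every x ∈ [0,1), F x ≠ x. (Paper's Lemma 8, third case.) -/
import Mathlib

section helpers
variable {s : ℕ}

lemma dig_nonneg (a : ℕ → Fin s) (n : ℕ) : (0:ℝ) ≤ ((a n : ℕ) : ℝ) / (s:ℝ) ^ (n+1) := by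
  positivity

lemma dig_le (hs : 2 ≤ s) (a : ℕ → Fin s) (n : ℕ) :
    ((a n : ℕ) : ℝ) / (s:ℝ) ^ (n+1) ≤ ((s - 1 : ℕ) : ℝ) / (s:ℝ) ^ (n+1) := by
  have hsp : (0:ℝ) < (s:ℝ) ^ (n+1) := by positivity
  gcongr
  exact_mod_cast Nat.le_sub_one_of_lt (a n).isLt

lemma geom_term (hs : 2 ≤ s) (m : ℕ) :
    ∑' n : ℕ, ((s - 1 : ℕ) : ℝ) / (s:ℝ) ^ (n + m + 1) = (1 / s : ℝ) ^ m := by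
  have hs0 : (0:ℝ) < s := by positivity
  have hs0' : (s:ℝ) ≠ 0 := ne_of_gt hs0
  have hlt : (1/(s:ℝ)) < 1 := by
    rw [div_lt_one hs0]; exact_mod_cast by omega
  have h1 : ∀ n : ℕ, ((s - 1 : ℕ) : ℝ) / (s:ℝ) ^ (n + m + 1)
      = (((s - 1 : ℕ) : ℝ) / (s:ℝ) ^ (m + 1)) * (1/(s:ℝ)) ^ n := by
    intro n
    rw [div_pow, one_pow, div_mul_div_comm, mul_one, pow_add, pow_add, pow_one]
    ring_nf
  have hsn1 : ((s - 1 : ℕ) : ℝ) = (s:ℝ) - 1 := by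
    have : (1:ℕ) ≤ s := by omega
    push_cast [this]; ring
  have hne : (s:ℝ) - 1 ≠ 0 := by
    have : (2:ℝ) ≤ s := by exact_mod_cast hs
    linarith
  rw [tsum_congr h1, tsum_mul_left, tsum_geometric_of_lt_one (by positivity) hlt, hsn1,
    div_pow, one_pow, pow_add, pow_one]
  field_simp

lemma summable_dig (hs : 2 ≤ s) (a : ℕ → Fin s) :
    Summable (fun n : ℕ => ((a n : ℕ) : ℝ) / (s:ℝ) ^ (n+1)) := by
  have hlt : (1/(s:ℝ)) < 1 := by
    rw [div_lt_one (by positivity)]; exact_mod_cast by omega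
  have hgeo := summable_geometric_of_lt_one (r := 1/(s:ℝ)) (by positivity) hlt
  have h1 : ∀ n : ℕ, ((s - 1 : ℕ) : ℝ) / (s:ℝ) ^ (n + 1)
      = (((s - 1 : ℕ) : ℝ) / (s:ℝ) ^ 1) * (1/(s:ℝ)) ^ n := by
    intro n
    rw [div_pow, one_pow, div_mul_div_comm, mul_one, pow_add, pow_one]
    ring_nf
  have : Summable (fun n : ℕ => ((s - 1 : ℕ) : ℝ) / (s:ℝ) ^ (n + 1)) :=
    (summable_congr h1).2 (hgeo.mul_left _)
  exact this.of_nonneg_of_le (dig_nonneg a) (dig_le hs a)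

lemma summable_dig_shift (hs : 2 ≤ s) (a : ℕ → Fin s) (m : ℕ) :
    Summable (fun n : ℕ => ((a (n + m) : ℕ) : ℝ) / (s:ℝ) ^ (n + m + 1)) := by
  have := (summable_nat_add_iff (f := fun n : ℕ => ((a n : ℕ) : ℝ) / (s:ℝ) ^ (n + 1)) m).2
    (summable_dig hs a)
  exact this

end helpers

section uniq
variable {s : ℕ}

lemma eventual_tail (hs : 2 ≤ s) (a b : ℕ → Fin s)
    (hsum : ∑' n : ℕ, ((b n : ℕ) : ℝ) / (s:ℝ) ^ (n+1) = ∑' n : ℕ, ((a n : ℕ) : ℝ) / (s:ℝ) ^ (n+1))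
    (hadm : ¬ ∃ N, ∀ n ≥ N, (a n : ℕ) = s - 1) (hne : b ≠ a) :
    ∃ m, ∀ n > m, (b n : ℕ) = s - 1 ∧ (a n : ℕ) = 0 := by
  have hex : ∃ n, b n ≠ a n := Function.ne_iff.1 hne
  set m := Nat.find hex with hmdef
  have hm : b m ≠ a m := Nat.find_spec hex
  have hmin : ∀ n < m, b n = a n := by
    intro n hn
    by_contra h
    exact Nat.find_min hex hn h
  set fb : ℕ → ℝ := fun n => ((b n : ℕ) : ℝ) / (s:ℝ) ^ (n+1) with hfb
  set fa : ℕ → ℝ := fun n => ((a n : ℕ) : ℝ) / (s:ℝ) ^ (n+1) with hfa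
  have hsb := summable_dig hs b
  have hsa := summable_dig hs a
  have h1 : ∑ n ∈ Finset.range (m+1), fb n + ∑' n : ℕ, fb (n + (m+1)) = ∑' n, fb n :=
    Summable.sum_add_tsum_nat_add (m+1) hsb
  have h2 : ∑ n ∈ Finset.range (m+1), fa n + ∑' n : ℕ, fa (n + (m+1)) = ∑' n, fa n :=
    Summable.sum_add_tsum_nat_add (m+1) hsa
  set Tb := ∑' n : ℕ, fb (n + (m+1)) with hTb
  set Ta := ∑' n : ℕ, fa (n + (m+1)) with hTa
  have hrange : ∑ n ∈ Finset.range m, fb n = ∑ n ∈ Finset.range m, fa n := by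
    refine Finset.sum_congr rfl fun n hn => ?_
    simp only [hfb, hfa, hmin n (Finset.mem_range.1 hn)]
  have hkey : fb m + Tb = fa m + Ta := by
    rw [Finset.sum_range_succ] at h1 h2
    rw [hrange] at h1
    have := h1.trans (hsum.trans h2.symm)
    linarith
  have hsbs := summable_dig_shift hs b (m+1)
  have hsas := summable_dig_shift hs a (m+1)
  have hgeosum : Summable (fun n : ℕ => ((s - 1 : ℕ) : ℝ) / (s:ℝ) ^ (n + (m+1) + 1)) := by
    have := (summable_nat_add_iff
      (f := fun n : ℕ => ((s - 1 : ℕ) : ℝ) / (s:ℝ) ^ (n + 1)) (m+1)).2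
      (summable_dig hs (fun _ => ⟨s - 1, by omega⟩))
    simpa using this
  have hgeo := geom_term hs (m+1)
  have hTb_le : Tb ≤ (1/(s:ℝ)) ^ (m+1) := by
    rw [← hgeo]
    exact Summable.tsum_le_tsum (fun n => dig_le hs b (n + (m+1))) hsbs hgeosum
  have hTa_le : Ta < (1/(s:ℝ)) ^ (m+1) := by
    rw [← hgeo]
    push_neg at hadm
    obtain ⟨n0, hn0ge, hn0⟩ := hadm (m+1)
    have hj : n0 - (m+1) + (m+1) = n0 := by omega
    refine Summable.tsum_lt_tsum (i := n0 - (m+1)) (fun n => dig_le hs a (n + (m+1))) ?_ hsas hgeosum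
    rw [hj]
    have hlt : (a n0 : ℕ) < s - 1 := by
      have := (a n0).isLt; omega
    have hsp : (0:ℝ) < (s:ℝ) ^ (n0 + 1) := by positivity
    simp only [hfa]
    apply div_lt_div_of_pos_right ?_ hsp -- maybe wrong name
    exact_mod_cast hlt
  have hTb_nonneg : 0 ≤ Tb := tsum_nonneg (fun n => dig_nonneg b (n + (m+1)))
  have hTa_nonneg : 0 ≤ Ta := tsum_nonneg (fun n => dig_nonneg a (n + (m+1)))
  have hpow : ((1:ℝ)/s) ^ (m+1) = 1 / (s:ℝ) ^ (m+1) := by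
    rw [div_pow, one_pow]
  have hsp : (0:ℝ) < (s:ℝ) ^ (m+1) := by positivity
  rcases lt_trichotomy ((b m : ℕ)) ((a m : ℕ)) with hlt | heq | hgt
  · -- fa m - fb m = Tb - Ta, forces Tb = bound, Ta = 0
    have hdiff : fa m - fb m = Tb - Ta := by linarith
    have hge1 : (1:ℝ) / (s:ℝ) ^ (m+1) ≤ fa m - fb m := by
      simp only [hfa, hfb]
      rw [div_sub_div_same]
      gcongr
      have : (b m : ℕ) + 1 ≤ (a m : ℕ) := hlt
      have := (Nat.cast_le (α := ℝ)).2 this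
      push_cast at this ⊢
      linarith
    have hTbeq : Tb = (1/(s:ℝ)) ^ (m+1) := by
      rw [hpow]
      rw [hpow] at hTb_le
      linarith
    have hTaeq : Ta = 0 := by
      rw [hpow] at hTbeq
      linarith
    refine ⟨m, fun n hn => ?_⟩
    have hj : n - (m+1) + (m+1) = n := by omega
    constructor
    · by_contra hbn
      have hblt : (b n : ℕ) < s - 1 := by have := (b n).isLt; omega
      have : Tb < (1/(s:ℝ)) ^ (m+1) := by
        rw [← hgeo]
        refine Summable.tsum_lt_tsum (i := n - (m+1)) (fun j => dig_le hs b (j + (m+1))) ?_ hsbs hgeosum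
        rw [hj]
        simp only [hfb]
        have hsp' : (0:ℝ) < (s:ℝ) ^ (n + 1) := by positivity
        apply div_lt_div_of_pos_right ?_ hsp'
        exact_mod_cast hblt
      rw [hTbeq] at this
      exact lt_irrefl _ this
    · by_contra han
      have hpos : 0 < fa (n - (m+1) + (m+1)) := by
        rw [hj]
        simp only [hfa]
        have : (0:ℕ) < (a n : ℕ) := Nat.pos_of_ne_zero han
        have hsp' : (0:ℝ) < (s:ℝ) ^ (n + 1) := by positivity
        positivity
      have hle : fa (n - (m+1) + (m+1)) ≤ Ta :=
        Summable.le_tsum hsas _ (fun j _ => dig_nonneg a (j + (m+1)))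
      rw [hTaeq] at hle
      linarith
  · exact absurd (Fin.ext heq) hm
  · -- b m > a m: contradiction
    have hdiff : fb m - fa m = Ta - Tb := by linarith
    have hge1 : (1:ℝ) / (s:ℝ) ^ (m+1) ≤ fb m - fa m := by
      simp only [hfa, hfb]
      rw [div_sub_div_same]
      gcongr
      have : (a m : ℕ) + 1 ≤ (b m : ℕ) := hgt
      have := (Nat.cast_le (α := ℝ)).2 this
      push_cast at this ⊢
      linarith
    rw [hpow] at hTa_le
    linarith

end uniq

section expansion
variable {s : ℕ}

lemma floor_mul_eq (hs : 2 ≤ s) (y : ℝ) :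
    ⌊(s:ℝ) * y⌋ = s * ⌊y⌋ + ⌊(s:ℝ) * Int.fract y⌋ := by
  have h : (s:ℝ) * y = (s:ℝ) * Int.fract y + ((s * ⌊y⌋ : ℤ) : ℝ) := by
    rw [Int.fract]; push_cast; ring
  rw [h, Int.floor_add_intCast]; ring

lemma floor_fract_bounds (hs : 2 ≤ s) (y : ℝ) :
    0 ≤ ⌊(s:ℝ) * Int.fract y⌋ ∧ ⌊(s:ℝ) * Int.fract y⌋ < s := by
  have hs0 : (0:ℝ) < s := by positivity
  constructor
  · exact Int.floor_nonneg.2 (mul_nonneg hs0.le (Int.fract_nonneg y))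
  · have : (s:ℝ) * Int.fract y < s := by
      nlinarith [Int.fract_lt_one y, Int.fract_nonneg y]
    exact_mod_cast Int.floor_lt.2 (by exact_mod_cast this)

lemma exists_expansion (hs : 2 ≤ s) (x : ℝ) (hx0 : 0 ≤ x) (hx1 : x < 1) :
    ∃ a : ℕ → Fin s, (¬ ∃ N, ∀ n ≥ N, (a n : ℕ) = s - 1) ∧
      x = ∑' n : ℕ, ((a n : ℕ) : ℝ) / (s:ℝ) ^ (n+1) := by
  have hs0 : (0:ℝ) < s := by positivity
  set d : ℕ → ℤ := fun n => ⌊x * (s:ℝ)^(n+1)⌋ - s * ⌊x * (s:ℝ)^n⌋ with hd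
  have hdeq : ∀ n, d n = ⌊(s:ℝ) * Int.fract (x * (s:ℝ)^n)⌋ := by
    intro n
    have h1 : x * (s:ℝ)^(n+1) = (s:ℝ) * (x * (s:ℝ)^n) := by ring
    simp only [hd]
    rw [h1, floor_mul_eq hs (x * (s:ℝ)^n)]
    ring
  have hdb : ∀ n, 0 ≤ d n ∧ d n < s := by
    intro n; rw [hdeq n]; exact floor_fract_bounds hs _
  have hdnat : ∀ n, (d n).toNat < s := by
    intro n; have := hdb n; omega
  set a : ℕ → Fin s := fun n => ⟨(d n).toNat, hdnat n⟩ with ha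
  have hcast : ∀ n, ((a n : ℕ) : ℝ) = ((d n : ℤ) : ℝ) := by
    intro n
    simp only [ha]
    exact_mod_cast congrArg (fun z : ℤ => (z : ℝ)) (Int.toNat_of_nonneg (hdb n).1)
  set S : ℕ → ℝ := fun N => ∑ n ∈ Finset.range N, ((a n : ℕ) : ℝ) / (s:ℝ) ^ (n+1) with hS
  have hfloor0 : ⌊x⌋ = 0 := Int.floor_eq_zero_iff.2 ⟨hx0, hx1⟩
  have hpart : ∀ N, S N = ((⌊x * (s:ℝ)^N⌋ : ℤ) : ℝ) / (s:ℝ)^N := by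
    intro N
    induction N with
    | zero =>
      have h0 : S 0 = 0 := Finset.sum_range_zero _
      rw [h0, pow_zero, mul_one, hfloor0]
      norm_num
    | succ N ih =>
      have hstep : S (N+1) = S N + ((a N : ℕ) : ℝ) / (s:ℝ)^(N+1) :=
        Finset.sum_range_succ _ _
      rw [hstep, ih, hcast N]
      simp only [hd]
      push_cast
      have hne : (s:ℝ)^N ≠ 0 := by positivity
      have hne1 : (s:ℝ)^(N+1) ≠ 0 := by positivity
      field_simp
      ring
  have hfr : ∀ N, x - S N = Int.fract (x * (s:ℝ)^N) / (s:ℝ)^N := by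
    intro N
    rw [hpart N, Int.fract]
    have hne : (s:ℝ)^N ≠ 0 := by positivity
    field_simp
  have hlt1 : (1/(s:ℝ)) < 1 := by
    rw [div_lt_one hs0]; exact_mod_cast by omega
  have hx_eq : x = ∑' n : ℕ, ((a n : ℕ) : ℝ) / (s:ℝ) ^ (n+1) := by
    have hsum := (summable_dig hs a).hasSum
    have htend := hsum.tendsto_sum_nat
    have hbound : ∀ N, ‖S N - x‖ ≤ (1/(s:ℝ))^N := by
      intro N
      rw [norm_sub_rev, Real.norm_eq_abs, hfr N,
        abs_of_nonneg (div_nonneg (Int.fract_nonneg _) (by positivity))]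
      rw [div_pow, one_pow, div_le_div_iff₀ (by positivity) (by positivity), one_mul]
      have h1 := Int.fract_lt_one (x * (s:ℝ)^N)
      nlinarith [pow_pos hs0 N, Int.fract_nonneg (x * (s:ℝ)^N)]
    have h0 : Filter.Tendsto (fun N : ℕ => (1/(s:ℝ))^N) Filter.atTop (nhds 0) :=
      tendsto_pow_atTop_nhds_zero_of_lt_one (by positivity) hlt1
    have h1 : Filter.Tendsto (fun N => S N - x) Filter.atTop (nhds 0) :=
      squeeze_zero_norm hbound h0
    have h2 : Filter.Tendsto S Filter.atTop (nhds x) := by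
      have := h1.add_const x
      simpa using this
    exact tendsto_nhds_unique h2 htend
  refine ⟨a, ?_, hx_eq⟩
  rintro ⟨N, hN⟩
  have htail : ∑' n : ℕ, ((a (n + N) : ℕ) : ℝ) / (s:ℝ) ^ ((n + N) + 1) = (1/(s:ℝ))^N := by
    rw [← geom_term hs N]
    refine tsum_congr fun n => ?_
    rw [hN (n + N) (by omega)]
  have hsplit := Summable.sum_add_tsum_nat_add (f := fun n : ℕ => ((a n : ℕ) : ℝ) / (s:ℝ) ^ (n+1)) N
    (summable_dig hs a)
  rw [htail] at hsplit
  have : x - S N = (1/(s:ℝ))^N := by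
    rw [hS]
    have := hx_eq ▸ hsplit
    linarith [hsplit, hx_eq]
  rw [hfr N] at this
  have h1 := Int.fract_lt_one (x * (s:ℝ)^N)
  have h2 : Int.fract (x * (s:ℝ)^N) / (s:ℝ)^N < (1/(s:ℝ))^N := by
    rw [div_pow, one_pow, div_lt_div_iff₀ (by positivity) (by positivity), one_mul]
    nlinarith [pow_pos hs0 N]
  rw [this] at h2
  exact lt_irrefl _ h2

end expansion

/-- Paper's Lemma 8, third case: if the block permutation `θ` defining `f^s_k`
has no fixed block, then `f^s_k` has no invariant points in `[0,1)`. -/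
theorem stmt_10 (s k : ℕ) (hs : 2 ≤ s) (hk : 1 ≤ k)
    (θ : (Fin k → Fin s) ≃ (Fin k → Fin s))
    (hθ0 : θ (fun _ => ⟨0, by omega⟩) ≠ (fun _ => ⟨s - 1, by omega⟩))
    (hθfix : ∀ b : Fin k → Fin s, θ b ≠ b)
    (Θ : (ℕ → Fin s) → (ℕ → Fin s))
    (hΘ : ∀ (a : ℕ → Fin s) (m : ℕ) (i : Fin k),
      Θ a (k * m + (i : ℕ)) = θ (fun j => a (k * m + (j : ℕ))) i)
    (F : ℝ → ℝ)
    (hF : ∀ a : ℕ → Fin s, (¬ ∃ N, ∀ n ≥ N, (a n : ℕ) = s - 1) →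
      F (∑' n : ℕ, ((a n : ℕ) : ℝ) / (s : ℝ) ^ (n + 1)) =
        ∑' n : ℕ, ((Θ a n : ℕ) : ℝ) / (s : ℝ) ^ (n + 1)) :
    ∀ x ∈ Set.Ico (0 : ℝ) 1, F x ≠ x := by
  rintro x ⟨hx0, hx1⟩ hFx
  obtain ⟨a, hadm, hxeq⟩ := exists_expansion hs x hx0 hx1
  have hFeq := hF a hadm
  rw [← hxeq, hFx] at hFeq
  have hsum : ∑' n : ℕ, ((Θ a n : ℕ) : ℝ) / (s:ℝ) ^ (n+1)
      = ∑' n : ℕ, ((a n : ℕ) : ℝ) / (s:ℝ) ^ (n+1) := by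
    rw [← hFeq, hxeq]
  by_cases hΘa : Θ a = a
  · apply hθfix (fun j => a (k * 0 + (j : ℕ)))
    funext i
    have h1 := hΘ a 0 i
    rw [hΘa] at h1
    exact h1.symm
  · obtain ⟨m, hm⟩ := eventual_tail hs a (Θ a) hsum hadm hΘa
    have hgt : ∀ i : Fin k, k * (m+1) + (i : ℕ) > m := by
      intro i
      have h1 : m + 1 ≤ k * (m+1) := Nat.le_mul_of_pos_left _ (by omega)
      omega
    apply hθ0
    have hblock : (fun j : Fin k => a (k * (m+1) + (j : ℕ)))
        = (fun _ : Fin k => (⟨0, by omega⟩ : Fin s)) := by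
      funext j
      exact Fin.ext (hm _ (hgt j)).2
    funext i
    have h1 := hΘ a (m+1) i
    rw [hblock] at h1
    refine Fin.ext ?_
    rw [← h1]
    exact (hm _ (hgt i)).1
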